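/- Let ν > 0 and B̂₀ ∈ ℝ³ a unit vector, D(k) = |k|²(Ω̂·k)² + ((B̂₀·k)² + ν|k|⁴)². For any l ∈ ℤ∖{0}, there is a choice of sign s ∈ {+1,-1} such that for k = (s, 0, l), we have (B̂₀·k)² + ν|k|⁴ < D(k)/(ν + (B̂₀)₁²). In particular the choice can be made so that (B̂₀)₁² ≤ (B̂₀·k)². -/

import Mathlib

open scoped RealInnerProductSpace

/-- For `k = (±1, 0, l)` with a suitable choice of sign,
`(B̂₀·k)² + ν|k|⁴ < D(k)/(ν + (B̂₀)₁²)`, with the choice made so `(B̂₀)₁² ≤ (B̂₀·k)²`. -/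
theorem stmt4 (ν : ℝ) (hν : 0 < ν) (B Ωh : EuclideanSpace ℝ (Fin 3))
    (hB : ‖B‖ = 1) (hΩ : ‖Ωh‖ = 1) (hΩ1 : Ωh 0 = 0) (l : ℤ) (hl : l ≠ 0) :
    ∃ s : ℤ, (s = 1 ∨ s = -1) ∧
      ∀ kR : EuclideanSpace ℝ (Fin 3),
        (kR 0 = (s : ℝ) ∧ kR 1 = 0 ∧ kR 2 = (l : ℝ)) →
          (B 0) ^ 2 ≤ ⟪B, kR⟫ ^ 2 ∧
            ⟪B, kR⟫ ^ 2 + ν * ‖kR‖ ^ 4 <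
              (‖kR‖ ^ 2 * ⟪Ωh, kR⟫ ^ 2 + (⟪B, kR⟫ ^ 2 + ν * ‖kR‖ ^ 4) ^ 2) /
                (ν + (B 0) ^ 2) := by
  set σ : ℤ := if 0 ≤ (l : ℝ) * (B 0 * B 2) then 1 else -1 with hσdef
  have hσcases : σ = 1 ∨ σ = -1 := by
    rw [hσdef]; split <;> simp
  refine ⟨σ, hσcases, ?_⟩
  rintro kR ⟨h0, h1, h2⟩
  have hσR : (σ : ℝ) = 1 ∨ (σ : ℝ) = -1 := by
    rcases hσcases with h | h <;> simp [h]
  have hσ2 : (σ : ℝ) ^ 2 = 1 := by rcases hσR with h | h <;> rw [h] <;> norm_num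
  have hsign : 0 ≤ (σ : ℝ) * ((l : ℝ) * (B 0 * B 2)) := by
    rw [hσdef]
    split
    · push_cast; nlinarith [‹0 ≤ (l : ℝ) * (B 0 * B 2)›]
    · push_cast
      have : (l : ℝ) * (B 0 * B 2) < 0 := lt_of_not_ge ‹_›
      nlinarith
  have hinner : ⟪B, kR⟫ = B 0 * σ + B 2 * l := by
    simp [PiLp.inner_apply, RCLike.inner_apply, Fin.sum_univ_three, h0, h1, h2]; ring
  have hn2 : ‖kR‖ ^ 2 = 1 + (l : ℝ) ^ 2 := by
    rw [← real_inner_self_eq_norm_sq]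
    simp only [PiLp.inner_apply, RCLike.inner_apply, Fin.sum_univ_three, h0, h1, h2, conj_trivial]
    nlinarith [hσ2]
  have hl2 : (1 : ℝ) ≤ (l : ℝ) ^ 2 := by
    have h1 : (1 : ℤ) ≤ |l| := Int.one_le_abs hl
    have : (1 : ℤ) ≤ l ^ 2 := by nlinarith [sq_abs l]
    exact_mod_cast this
  have hX : (B 0) ^ 2 ≤ ⟪B, kR⟫ ^ 2 := by
    rw [hinner]; nlinarith [hσ2, hsign, sq_nonneg (B 2 * (l : ℝ))]
  refine ⟨hX, ?_⟩
  have hden : 0 < ν + (B 0) ^ 2 := by positivity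
  rw [lt_div_iff₀ hden]
  have hn4 : ‖kR‖ ^ 4 = (1 + (l : ℝ) ^ 2) ^ 2 := by
    rw [show (4 : ℕ) = 2 * 2 from rfl, pow_mul, hn2]
  have hΩsq : 0 ≤ ‖kR‖ ^ 2 * ⟪Ωh, kR⟫ ^ 2 := by positivity
  have hgt : ν + (B 0) ^ 2 < ⟪B, kR⟫ ^ 2 + ν * ‖kR‖ ^ 4 := by
    nlinarith [hX, hn4, hl2, hν, sq_nonneg ((l : ℝ) ^ 2 - 1)]
  have hpos : 0 < ⟪B, kR⟫ ^ 2 + ν * ‖kR‖ ^ 4 := lt_trans hden hgt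
  nlinarith [mul_lt_mul_of_pos_left hgt hpos, hΩsq]
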